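/- Crucial observation: for any φ = (φ₁,…,φ_n) ∈ S_n with φ₀ := 0 and N = n+1, the multiset {σ_nⁱ(φ)_j : i = 0,…,n, j = 1,…,n} (of size Nn) equals the multiset sum over all pairs 0 ≤ k < l ≤ n of the two-element multisets {φ_l - φ_k, 1 - (φ_l - φ_k)}. -/

import Mathlib

/-- The affine shift map `σ_n : (θ₁,…,θ_n) ↦ (1-θ_n, θ₁+1-θ_n, …, θ_{n-1}+1-θ_n)`. -/
def shiftMap (n : ℕ) (hn : 0 < n) (θ : Fin n → ℝ) : Fin n → ℝ :=
  fun i =>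
    if i.1 = 0 then 1 - θ ⟨n - 1, Nat.sub_lt hn one_pos⟩
    else θ ⟨i.1 - 1, Nat.lt_of_le_of_lt (Nat.sub_le i.1 1) i.isLt⟩ + 1 -
      θ ⟨n - 1, Nat.sub_lt hn one_pos⟩

/-- The open simplex `S_n = {φ | 0 < φ₁ < … < φ_n < 1}`. -/
def simplexSet (n : ℕ) (hn : 0 < n) : Set (Fin n → ℝ) :=
  {θ | StrictMono θ ∧ 0 < θ ⟨0, hn⟩ ∧ θ ⟨n - 1, Nat.sub_lt hn one_pos⟩ < 1}

namespace CrucialAux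

/-- Key formula for the iterates of the shift map, `1 ≤ i ≤ n`. -/
lemma iterate_eq (n : ℕ) (hn : 0 < n) (φ : Fin n → ℝ)
    (Φ : Fin (n + 1) → ℝ) (hΦ0 : Φ 0 = 0)
    (hΦ : ∀ i : Fin (n + 1), ∀ _ : 0 < i.1, Φ i = φ ⟨i.1 - 1, by have := i.isLt; omega⟩) :
    ∀ i : ℕ, ∀ _h1 : 1 ≤ i, ∀ _h2 : i ≤ n, ∀ j : Fin n,
      (shiftMap n hn)^[i] φ j =
        if _ : i ≤ j.1 + 1
          then Φ ⟨j.1 + 1 - i, by omega⟩ + 1 - Φ ⟨n + 1 - i, by omega⟩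
          else Φ ⟨j.1 + 2 + n - i, by omega⟩ - Φ ⟨n + 1 - i, by omega⟩ := by
  have Φeq : ∀ (x y : ℕ) (hx : x < n + 1) (hy : y < n + 1), x = y →
      Φ ⟨x, hx⟩ = Φ ⟨y, hy⟩ := fun _ _ _ _ h => congrArg Φ (Fin.ext h)
  have hΦ' : ∀ (k : ℕ) (hk : k < n + 1) (h0 : 0 < k), Φ ⟨k, hk⟩ = φ ⟨k - 1, by omega⟩ :=
    fun k hk h0 => hΦ ⟨k, hk⟩ h0
  have hΦ0' : ∀ (hk : 0 < n + 1), Φ ⟨0, hk⟩ = 0 := by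
    intro hk
    have h : (⟨0, hk⟩ : Fin (n + 1)) = 0 := by ext; simp
    rw [h, hΦ0]
  have φeq : ∀ (x y : ℕ) (hx : x < n) (hy : y < n), x = y → φ ⟨x, hx⟩ = φ ⟨y, hy⟩ :=
    fun _ _ _ _ h => congrArg φ (Fin.ext h)
  intro i
  induction i with
  | zero => intro h1; exact absurd h1 (by omega)
  | succ i ih =>
    intro _h1 hle j
    rw [Function.iterate_succ_apply']
    rcases Nat.eq_zero_or_pos i with h0 | hpos
    · subst h0
      rw [Function.iterate_zero_apply]
      simp only [shiftMap]
      rw [dif_pos (by omega)]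
      rcases Nat.eq_zero_or_pos j.1 with hj | hj
      · rw [if_pos hj]
        rw [Φeq (j.1 + 1 - 1) 0 (by omega) (by omega) (by omega), hΦ0' (by omega),
          hΦ' (n + 1 - 1) (by omega) (by omega),
          φeq (n + 1 - 1 - 1) (n - 1) (by omega) (by omega) (by omega)]
        ring
      · rw [if_neg (by omega)]
        rw [hΦ' (j.1 + 1 - 1) (by omega) (by omega), hΦ' (n + 1 - 1) (by omega) (by omega),
          φeq (j.1 + 1 - 1 - 1) (j.1 - 1) (by omega) (by omega) (by omega),
          φeq (n + 1 - 1 - 1) (n - 1) (by omega) (by omega) (by omega)]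
    · have ihi := ih hpos (by omega)
      simp only [shiftMap]
      have hlast := ihi ⟨n - 1, Nat.sub_lt hn one_pos⟩
      rw [dif_pos (show i ≤ n - 1 + 1 by omega)] at hlast
      rcases Nat.eq_zero_or_pos j.1 with hj | hj
      · rw [if_pos hj, hlast, dif_neg (by omega)]
        rw [Φeq (j.1 + 2 + n - (i + 1)) (n + 1 - i) (by omega) (by omega) (by omega),
          Φeq (n + 1 - (i + 1)) (n - 1 + 1 - i) (by omega) (by omega) (by omega)]
        ring
      · rw [if_neg (by omega)]
        have hprev := ihi ⟨j.1 - 1, Nat.lt_of_le_of_lt (Nat.sub_le j.1 1) j.isLt⟩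
        rcases Nat.lt_or_ge j.1 i with hcase | hcase
        · -- i > j.1 : else branches
          rw [dif_neg (show ¬ (i ≤ j.1 - 1 + 1) by omega)] at hprev
          rw [hprev, hlast, dif_neg (by omega)]
          rw [Φeq (j.1 + 2 + n - (i + 1)) (j.1 - 1 + 2 + n - i) (by omega) (by omega) (by omega),
            Φeq (n + 1 - (i + 1)) (n - 1 + 1 - i) (by omega) (by omega) (by omega)]
          ring
        · -- i ≤ j.1 : then branches
          rw [dif_pos (show i ≤ j.1 - 1 + 1 by omega)] at hprev
          rw [hprev, hlast, dif_pos (by omega)]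
          rw [Φeq (j.1 + 1 - (i + 1)) (j.1 - 1 + 1 - i) (by omega) (by omega) (by omega),
            Φeq (n + 1 - (i + 1)) (n - 1 + 1 - i) (by omega) (by omega) (by omega)]
          ring


/-- `D a b` is `Φ a - Φ b` reduced mod 1 into `(0,1)` when `a ≠ b`. -/
def Dfun (N : ℕ) (Φ : Fin N → ℝ) (a b : Fin N) : ℝ :=
  if b.1 < a.1 then Φ a - Φ b else Φ a - Φ b + 1

def bF (n i : ℕ) : Fin (n + 1) := ⟨(n + 1 - i) % (n + 1), Nat.mod_lt _ (Nat.succ_pos n)⟩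

def aF (n i : ℕ) (j : Fin n) : Fin (n + 1) :=
  ⟨(j.1 + 1 + (n + 1 - i)) % (n + 1), Nat.mod_lt _ (Nat.succ_pos n)⟩

lemma mod_big {x N : ℕ} (h1 : N ≤ x) (h2 : x < 2 * N) : x % N = x - N := by
  rw [Nat.mod_eq_sub_mod h1, Nat.mod_eq_of_lt (by omega)]

lemma bF_val {n : ℕ} (i : ℕ) (h : i ≤ n) :
    (bF n i).1 = if i = 0 then 0 else n + 1 - i := by
  unfold bF
  split
  · next h0 => subst h0; simp
  · next h0 => exact Nat.mod_eq_of_lt (by omega)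

lemma aF_val {n : ℕ} (i : ℕ) (h : i ≤ n) (j : Fin n) :
    (aF n i j).1 = if i ≤ j.1 + 1 then j.1 + 1 - i else j.1 + 2 + n - i := by
  unfold aF
  split
  · next hle =>
    show (j.1 + 1 + (n + 1 - i)) % (n + 1) = j.1 + 1 - i
    rw [mod_big (by omega) (by omega)]
    omega
  · next hgt =>
    show (j.1 + 1 + (n + 1 - i)) % (n + 1) = j.1 + 2 + n - i
    rw [Nat.mod_eq_of_lt (by omega)]
    omega

lemma aF_inj {n : ℕ} (i : ℕ) : Function.Injective (aF n i) := by
  intro j j' h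
  have hv : (j.1 + 1 + (n + 1 - i)) % (n + 1) = (j'.1 + 1 + (n + 1 - i)) % (n + 1) :=
    congrArg Fin.val h
  have h2 : (j.1 + 1) % (n + 1) = (j'.1 + 1) % (n + 1) :=
    Nat.ModEq.add_right_cancel' _ hv
  rw [Nat.mod_eq_of_lt (by omega), Nat.mod_eq_of_lt (by omega)] at h2
  exact Fin.ext (by omega)

lemma aF_ne_bF {n : ℕ} (i : ℕ) (j : Fin n) : aF n i j ≠ bF n i := by
  intro h
  have hv : (j.1 + 1 + (n + 1 - i)) % (n + 1) = (n + 1 - i) % (n + 1) :=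
    congrArg Fin.val h
  have h2 : (j.1 + 1) % (n + 1) = 0 % (n + 1) := by
    refine Nat.ModEq.add_right_cancel' (n + 1 - i) ?_
    unfold Nat.ModEq
    rw [Nat.zero_add]
    exact hv
  rw [Nat.mod_eq_of_lt (by omega), Nat.zero_mod] at h2
  omega

lemma bF_inj {n i i' : ℕ} (hi : i ≤ n) (hi' : i' ≤ n) (h : bF n i = bF n i') : i = i' := by
  have hv := congrArg Fin.val h
  rw [bF_val i hi, bF_val i' hi'] at hv
  split_ifs at hv <;> omega

/-- The iterates expressed via `Dfun`. -/
lemma bridge (n : ℕ) (hn : 0 < n) (φ : Fin n → ℝ)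
    (Φ : Fin (n + 1) → ℝ) (hΦ0 : Φ 0 = 0)
    (hΦ : ∀ i : Fin (n + 1), ∀ _ : 0 < i.1, Φ i = φ ⟨i.1 - 1, by have := i.isLt; omega⟩)
    (i : ℕ) (hi : i ≤ n) (j : Fin n) :
    (shiftMap n hn)^[i] φ j = Dfun (n + 1) Φ (aF n i j) (bF n i) := by
  rcases Nat.eq_zero_or_pos i with h0 | hpos
  · subst h0
    rw [Function.iterate_zero_apply]
    have ha : aF n 0 j = ⟨j.1 + 1, by omega⟩ := by
      refine Fin.ext ?_
      show (j.1 + 1 + (n + 1 - 0)) % (n + 1) = j.1 + 1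
      rw [mod_big (by omega) (by omega)]
      omega
    have hb : bF n 0 = ⟨0, by omega⟩ := by
      refine Fin.ext ?_
      show (n + 1 - 0) % (n + 1) = 0
      rw [Nat.sub_zero, Nat.mod_self]
    rw [Dfun, ha, hb, if_pos (show (0:ℕ) < j.1 + 1 by omega)]
    have h1 : Φ ⟨j.1 + 1, by omega⟩ = φ ⟨j.1, j.isLt⟩ := by
      rw [hΦ ⟨j.1 + 1, by omega⟩ (Nat.succ_pos j.1)]
      rfl
    have h2 : Φ ⟨0, by omega⟩ = 0 := by
      rw [show (⟨0, by omega⟩ : Fin (n + 1)) = 0 from Fin.ext (by simp), hΦ0]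
    rw [h1, h2, Fin.eta]
    ring
  · rw [iterate_eq n hn φ Φ hΦ0 hΦ i hpos hi j]
    by_cases hc : i ≤ j.1 + 1
    · rw [dif_pos hc]
      have ha : aF n i j = ⟨j.1 + 1 - i, by omega⟩ := by
        refine Fin.ext ?_
        show (j.1 + 1 + (n + 1 - i)) % (n + 1) = j.1 + 1 - i
        rw [mod_big (by omega) (by omega)]
        omega
      have hb : bF n i = ⟨n + 1 - i, by omega⟩ := by
        refine Fin.ext ?_
        show (n + 1 - i) % (n + 1) = n + 1 - i
        exact Nat.mod_eq_of_lt (by omega)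
      rw [Dfun, ha, hb, if_neg (show ¬ (n + 1 - i < j.1 + 1 - i) by omega)]
      ring
    · rw [dif_neg hc]
      have ha : aF n i j = ⟨j.1 + 2 + n - i, by omega⟩ := by
        refine Fin.ext ?_
        show (j.1 + 1 + (n + 1 - i)) % (n + 1) = j.1 + 2 + n - i
        rw [Nat.mod_eq_of_lt (by omega)]
        omega
      have hb : bF n i = ⟨n + 1 - i, by omega⟩ := by
        refine Fin.ext ?_
        show (n + 1 - i) % (n + 1) = n + 1 - i
        exact Nat.mod_eq_of_lt (by omega)
      rw [Dfun, ha, hb, if_pos (show n + 1 - i < j.1 + 2 + n - i by omega)]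

def pairEmb (n i : ℕ) : Fin n ↪ Fin (n + 1) × Fin (n + 1) :=
  ⟨fun j => (aF n i j, bF n i), fun j j' h => aF_inj i (congrArg Prod.fst h)⟩

lemma hdisj (n : ℕ) : (↑(Finset.range (n + 1)) : Set ℕ).PairwiseDisjoint
    (fun i => Finset.univ.map (pairEmb n i)) := by
  intro i hi i' hi' hne
  simp only [Finset.coe_range, Set.mem_Iio] at hi hi'
  refine Finset.disjoint_left.mpr ?_
  rintro p hp hp'
  rw [Finset.mem_map] at hp hp'
  obtain ⟨j, -, rfl⟩ := hp
  obtain ⟨j', -, hj'⟩ := hp'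
  have h2 : bF n i' = bF n i := congrArg Prod.snd hj'
  exact hne (bF_inj (by omega) (by omega) h2).symm

lemma Kfin (n : ℕ) :
    Finset.disjiUnion (Finset.range (n + 1)) (fun i => Finset.univ.map (pairEmb n i))
      (hdisj n) =
    Finset.univ.filter (fun p : Fin (n + 1) × Fin (n + 1) => p.1 ≠ p.2) := by
  ext p
  simp only [Finset.mem_disjiUnion, Finset.mem_map, Finset.mem_filter, Finset.mem_univ,
    Finset.mem_range, true_and]
  constructor
  · rintro ⟨i, hi, j, -, rfl⟩
    exact aF_ne_bF i j
  · intro hp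
    have hvne : p.1.1 ≠ p.2.1 := fun h => hp (Fin.ext h)
    rcases Nat.eq_zero_or_pos p.2.1 with hb | hb
    · refine ⟨0, by omega, ⟨p.1.1 - 1, by omega⟩, ?_⟩
      show (aF n 0 _, bF n 0) = p
      have h1 : aF n 0 ⟨p.1.1 - 1, by omega⟩ = p.1 := by
        refine Fin.ext ?_
        show (p.1.1 - 1 + 1 + (n + 1 - 0)) % (n + 1) = p.1.1
        rw [mod_big (by omega) (by omega)]
        omega
      have h2 : bF n 0 = p.2 := by
        refine Fin.ext ?_
        show (n + 1 - 0) % (n + 1) = p.2.1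
        rw [Nat.sub_zero, Nat.mod_self]
        omega
      rw [h1, h2]
    · refine ⟨n + 1 - p.2.1, by omega, ?_⟩
      rcases Nat.lt_or_ge p.1.1 p.2.1 with hab | hab
      · refine ⟨⟨p.1.1 + n - p.2.1, by omega⟩, ?_⟩
        show (aF n _ _, bF n _) = p
        have h1 : aF n (n + 1 - p.2.1) ⟨p.1.1 + n - p.2.1, by omega⟩ = p.1 := by
          refine Fin.ext ?_
          show (p.1.1 + n - p.2.1 + 1 + (n + 1 - (n + 1 - p.2.1))) % (n + 1) = p.1.1
          rw [mod_big (by omega) (by omega)]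
          omega
        have h2 : bF n (n + 1 - p.2.1) = p.2 := by
          refine Fin.ext ?_
          show (n + 1 - (n + 1 - p.2.1)) % (n + 1) = p.2.1
          rw [Nat.mod_eq_of_lt (by omega)]
          omega
        rw [h1, h2]
      · refine ⟨⟨p.1.1 - p.2.1 - 1, by omega⟩, ?_⟩
        show (aF n _ _, bF n _) = p
        have h1 : aF n (n + 1 - p.2.1) ⟨p.1.1 - p.2.1 - 1, by omega⟩ = p.1 := by
          refine Fin.ext ?_
          show (p.1.1 - p.2.1 - 1 + 1 + (n + 1 - (n + 1 - p.2.1))) % (n + 1) = p.1.1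
          rw [Nat.mod_eq_of_lt (by omega)]
          omega
        have h2 : bF n (n + 1 - p.2.1) = p.2 := by
          refine Fin.ext ?_
          show (n + 1 - (n + 1 - p.2.1)) % (n + 1) = p.2.1
          rw [Nat.mod_eq_of_lt (by omega)]
          omega
        rw [h1, h2]

end CrucialAux

namespace CrucialAux

lemma bind_pair {α : Type*} (s : Multiset α) (f g : α → ℝ) :
    (s.bind fun a => ({f a, g a} : Multiset ℝ)) = s.map f + s.map g := by
  refine Multiset.induction_on s (by simp) ?_
  intro a s ih
  rw [Multiset.cons_bind, ih, Multiset.map_cons, Multiset.map_cons]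
  have key : ∀ (x y : ℝ) (u v : Multiset ℝ),
      ({x, y} : Multiset ℝ) + (u + v) = (x ::ₘ u) + (y ::ₘ v) := by
    intro x y u v
    refine Multiset.ext.mpr fun b => ?_
    simp only [Multiset.insert_eq_cons, Multiset.count_add, Multiset.count_cons,
      Multiset.count_singleton]
    split_ifs <;> omega
  exact key _ _ _ _

lemma rhs_eq (n : ℕ) (Φ : Fin (n + 1) → ℝ) :
    ((Finset.univ.filter fun p : Fin (n + 1) × Fin (n + 1) => p.1 ≠ p.2).val).map
        (fun p => Dfun (n + 1) Φ p.1 p.2) =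
      ((Finset.univ.filter fun p : Fin (n + 1) × Fin (n + 1) => p.1 < p.2).val.bind
        fun p => {Φ p.2 - Φ p.1, 1 - (Φ p.2 - Φ p.1)}) := by
  have hsplit : (Finset.univ.filter fun p : Fin (n + 1) × Fin (n + 1) => p.2 < p.1).val +
      (Finset.univ.filter fun p : Fin (n + 1) × Fin (n + 1) => p.1 < p.2).val =
      (Finset.univ.filter fun p : Fin (n + 1) × Fin (n + 1) => p.1 ≠ p.2).val := by
    rw [Finset.filter_val, Finset.filter_val, Finset.filter_val, Multiset.filter_add_filter]
    have h1 : Multiset.filter (fun p : Fin (n + 1) × Fin (n + 1) => p.2 < p.1 ∨ p.1 < p.2)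
        Finset.univ.val =
        Multiset.filter (fun p : Fin (n + 1) × Fin (n + 1) => p.1 ≠ p.2) Finset.univ.val := by
      refine Multiset.filter_congr fun p _ => ?_
      constructor
      · rintro (h | h)
        · exact ne_of_gt h
        · exact ne_of_lt h
      · exact fun h => (lt_or_gt_of_ne h).symm
    have h2 : Multiset.filter (fun p : Fin (n + 1) × Fin (n + 1) => p.2 < p.1 ∧ p.1 < p.2)
        Finset.univ.val = 0 :=
      Multiset.filter_eq_nil.mpr fun p _ h => absurd h.2 (asymm h.1)
    rw [h1, h2, add_zero]
  have hswap : (Finset.univ.filter fun p : Fin (n + 1) × Fin (n + 1) => p.2 < p.1).val =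
      (Finset.univ.filter fun p : Fin (n + 1) × Fin (n + 1) => p.1 < p.2).val.map Prod.swap := by
    refine (Multiset.Nodup.ext (Finset.nodup _)
      (Multiset.Nodup.map Prod.swap_injective (Finset.nodup _))).mpr ?_
    intro p
    simp only [Multiset.mem_map, Finset.mem_val, Finset.mem_filter, Finset.mem_univ, true_and]
    constructor
    · intro h
      exact ⟨p.swap, h, Prod.swap_swap p⟩
    · rintro ⟨q, hq, rfl⟩
      exact hq
  rw [← hsplit, Multiset.map_add, hswap, Multiset.map_map, bind_pair]
  congr 1
  · refine Multiset.map_congr rfl fun p hp => ?_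
    have hlt : p.1 < p.2 := (Finset.mem_filter.mp (Finset.mem_val.mp hp)).2
    show Dfun (n + 1) Φ p.2 p.1 = Φ p.2 - Φ p.1
    rw [Dfun, if_pos (show p.1.1 < p.2.1 from hlt)]
  · refine Multiset.map_congr rfl fun p hp => ?_
    have hlt : p.1 < p.2 := (Finset.mem_filter.mp (Finset.mem_val.mp hp)).2
    rw [Dfun, if_neg (show ¬ (p.2.1 < p.1.1) from not_lt_of_gt hlt)]
    ring

end CrucialAux

/-- Crucial observation: for `φ ∈ S_n` with `φ₀ = 0`, the multiset
`{σ_nⁱ(φ)_j : 0 ≤ i ≤ n, 1 ≤ j ≤ n}` equals the multiset sum over all pairs `0 ≤ k < l ≤ n`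
of the two-element multisets `{φ_l - φ_k, 1 - (φ_l - φ_k)}`. -/
theorem crucial_observation (n : ℕ) (hn : 0 < n) (φ : Fin n → ℝ)
    (hφ : φ ∈ simplexSet n hn)
    (Φ : Fin (n + 1) → ℝ)
    (hΦ0 : Φ 0 = 0)
    (hΦ : ∀ i : Fin (n + 1), ∀ h : 0 < i.1, Φ i = φ ⟨i.1 - 1, by omega⟩) :
    ((Finset.range (n + 1)).val.bind fun i =>
        (Finset.univ.val : Multiset (Fin n)).map fun j => (shiftMap n hn)^[i] φ j) =
      ((Finset.univ.filter fun p : Fin (n + 1) × Fin (n + 1) => p.1 < p.2).val.bind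
        fun p => {Φ p.2 - Φ p.1, 1 - (Φ p.2 - Φ p.1)}) := by
  classical
  open CrucialAux in
  calc ((Finset.range (n + 1)).val.bind fun i =>
        (Finset.univ.val : Multiset (Fin n)).map fun j => (shiftMap n hn)^[i] φ j)
      = (Finset.range (n + 1)).val.bind fun i =>
          (Finset.univ.val : Multiset (Fin n)).map fun j =>
            Dfun (n + 1) Φ (aF n i j) (bF n i) := by
        refine Multiset.bind_congr fun i hi => ?_
        refine Multiset.map_congr rfl fun j _ => ?_
        exact bridge n hn φ Φ hΦ0 hΦ i
          (by have := Finset.mem_range.mp (Finset.mem_val.mp hi); omega) j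
    _ = ((Finset.range (n + 1)).val.bind fun i =>
          (Finset.univ.val : Multiset (Fin n)).map fun j => (aF n i j, bF n i)).map
            (fun p => Dfun (n + 1) Φ p.1 p.2) := by
        rw [Multiset.map_bind]
        refine Multiset.bind_congr fun i _ => ?_
        rw [Multiset.map_map]
        rfl
    _ = (((Finset.range (n + 1)).disjiUnion
          (fun i => Finset.univ.map (pairEmb n i)) (hdisj n)).val).map
            (fun p => Dfun (n + 1) Φ p.1 p.2) := by
        rw [Finset.disjiUnion_val]
        refine congrArg _ (Multiset.bind_congr fun i _ => ?_)
        rw [Finset.map_val]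
        rfl
    _ = ((Finset.univ.filter fun p : Fin (n + 1) × Fin (n + 1) => p.1 ≠ p.2).val).map
          (fun p => Dfun (n + 1) Φ p.1 p.2) := by rw [Kfin n]
    _ = ((Finset.univ.filter fun p : Fin (n + 1) × Fin (n + 1) => p.1 < p.2).val.bind
          fun p => {Φ p.2 - Φ p.1, 1 - (Φ p.2 - Φ p.1)}) := rhs_eq n Φ
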